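/- Let φ : [e,∞) → [0, π/4] satisfy, for every r ≥ e, the equation (2 log r) sin(2φ(r)) − 2(π/2 − φ(r)) cos(2φ(r)) − sin(2φ(r)) − (sin φ(r))/r = 0. Then lim_{r→∞} (4 log r / π) · sin φ(r) = 1. -/

import Mathlib

open Real Filter

theorem stmt_13 (φ : ℝ → ℝ)
    (hrange : ∀ r, Real.exp 1 ≤ r → φ r ∈ Set.Icc 0 (π / 4))
    (heq : ∀ r, Real.exp 1 ≤ r →
      (2 * Real.log r) * Real.sin (2 * φ r)
        - 2 * (π / 2 - φ r) * Real.cos (2 * φ r)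
        - Real.sin (2 * φ r) - Real.sin (φ r) / r = 0) :
    Tendsto (fun r => (4 * Real.log r / π) * Real.sin (φ r)) atTop (nhds 1) := by
  have hπ : (0:ℝ) < π := Real.pi_pos
  have h1e : (1:ℝ) ≤ Real.exp 1 := by
    have := Real.add_one_le_exp (1:ℝ); linarith
  have hev : ∀ᶠ r in atTop, Real.exp 1 ≤ r := eventually_ge_atTop _
  -- basic facts for r ≥ e
  have hlog : ∀ r, Real.exp 1 ≤ r → 1 ≤ Real.log r := by
    intro r hr
    have := Real.log_le_log (Real.exp_pos 1) hr
    simpa using this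
  have hrpos : ∀ r : ℝ, Real.exp 1 ≤ r → (0:ℝ) < r := fun r hr =>
    lt_of_lt_of_le (Real.exp_pos 1) hr
  -- φ → 0
  have hφ0 : Tendsto (fun r => φ r) atTop (nhds 0) := by
    have hb : Tendsto (fun r => (π/4) * (π+1) / Real.log r) atTop (nhds 0) := by
      have h1 : Tendsto (fun r => (Real.log r)⁻¹) atTop (nhds 0) :=
        Real.tendsto_log_atTop.inv_tendsto_atTop
      have := h1.const_mul ((π/4) * (π+1))
      simpa [div_eq_mul_inv] using this
    refine squeeze_zero' (hev.mono fun r hr => (hrange r hr).1)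
      (hev.mono fun r hr => ?_) hb
    obtain ⟨h0, h4⟩ := hrange r hr
    have hL := hlog r hr
    have hrp := hrpos r hr
    have hs2 : 2 / π * (2 * φ r) ≤ Real.sin (2 * φ r) :=
      Real.mul_le_sin (by linarith) (by linarith)
    have hs2' : φ r ≤ (π/4) * Real.sin (2 * φ r) := by
      have hkey : π/4 * (2/π * (2 * φ r)) = φ r := by
        field_simp
        ring
      have := mul_le_mul_of_nonneg_left hs2 (show (0:ℝ) ≤ π/4 by positivity)
      linarith
    -- bound sin(2φ)
    have heqr := heq r hr
    have hcosb : Real.cos (2 * φ r) ≤ 1 := Real.cos_le_one _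
    have hcos0 : 0 ≤ Real.cos (2 * φ r) := by
      apply Real.cos_nonneg_of_mem_Icc
      constructor <;> [linarith; linarith]
    have hsin1 : Real.sin (φ r) ≤ 1 := Real.sin_le_one _
    have hsin0 : 0 ≤ Real.sin (φ r) := Real.sin_nonneg_of_nonneg_of_le_pi h0 (by linarith)
    have hA : 2 * (π / 2 - φ r) * Real.cos (2 * φ r) ≤ π := by
      have h1 : 2 * (π / 2 - φ r) ≤ π := by linarith
      have h2 : 0 ≤ 2 * (π / 2 - φ r) := by linarith
      nlinarith
    have hC : Real.sin (φ r) / r ≤ 1 := by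
      rw [div_le_one hrp]; linarith
    have hkey : Real.sin (2 * φ r) * (2 * Real.log r - 1) ≤ π + 1 := by nlinarith
    have hs2nn : 0 ≤ Real.sin (2 * φ r) :=
      Real.sin_nonneg_of_nonneg_of_le_pi (by linarith) (by linarith)
    have hs2b : Real.sin (2 * φ r) ≤ (π + 1) / Real.log r := by
      rw [le_div_iff₀ (by linarith)]
      nlinarith
    calc φ r ≤ (π/4) * Real.sin (2 * φ r) := hs2'
      _ ≤ (π/4) * ((π+1) / Real.log r) := by
          apply mul_le_mul_of_nonneg_left hs2b (by positivity)
      _ = (π/4) * (π+1) / Real.log r := by ring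
  -- limit pieces
  have hA : Tendsto (fun r => 2 * (π / 2 - φ r) * Real.cos (2 * φ r)) atTop (nhds π) := by
    have hc : Continuous fun x : ℝ => 2 * (π / 2 - x) * Real.cos (2 * x) := by fun_prop
    have h := (hc.tendsto 0).comp hφ0
    have hval : 2 * (π / 2 - (0:ℝ)) * Real.cos (2 * 0) = π := by
      rw [mul_zero, Real.cos_zero]; ring
    rw [hval] at h
    exact h
  have hB : Tendsto (fun r => Real.sin (2 * φ r)) atTop (nhds 0) := by
    have hc : Continuous fun x : ℝ => Real.sin (2 * x) := by fun_prop
    have h := (hc.tendsto 0).comp hφ0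
    simpa [Function.comp_def] using h
  have hC : Tendsto (fun r => Real.sin (φ r) / r) atTop (nhds 0) := by
    have hb : Tendsto (fun r : ℝ => r⁻¹) atTop (nhds 0) := tendsto_inv_atTop_zero
    refine squeeze_zero_norm' ?_ hb
    filter_upwards [hev] with r hr
    have hrp := hrpos r hr
    rw [Real.norm_eq_abs, abs_div, abs_of_pos hrp, div_le_iff₀ hrp,
      inv_mul_cancel₀ hrp.ne']
    exact (abs_le.2 ⟨Real.neg_one_le_sin _, Real.sin_le_one _⟩)
  have hD : Tendsto (fun r => π * Real.cos (φ r)) atTop (nhds π) := by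
    have hc : Continuous fun x : ℝ => π * Real.cos x := by fun_prop
    have h := (hc.tendsto 0).comp hφ0
    simpa [Function.comp_def] using h
  have hsum : Tendsto (fun r => (2 * (π / 2 - φ r) * Real.cos (2 * φ r)
      + Real.sin (2 * φ r) + Real.sin (φ r) / r) / (π * Real.cos (φ r))) atTop (nhds 1) := by
    have h := ((hA.add hB).add hC).div hD hπ.ne'
    have hval : (π + 0 + 0) / π = (1:ℝ) := by field_simp; ring
    rw [hval] at h
    exact h
  refine hsum.congr' ?_
  filter_upwards [hev] with r hr
  have heqr := heq r hr
  obtain ⟨h0, h4⟩ := hrange r hr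
  have hcos : Real.cos (φ r) ≠ 0 := by
    have : 0 < Real.cos (φ r) := by
      apply Real.cos_pos_of_mem_Ioo
      constructor <;> nlinarith
    exact this.ne'
  have hrp : (0:ℝ) < r := hrpos r hr
  rw [Real.sin_two_mul] at heqr ⊢
  have heqr' : (2 * Real.log r) * (2 * Real.sin (φ r) * Real.cos (φ r)) * r
      - 2 * (π / 2 - φ r) * Real.cos (2 * φ r) * r
      - (2 * Real.sin (φ r) * Real.cos (φ r)) * r - Real.sin (φ r) = 0 := by
    field_simp at heqr
    linarith [heqr]
  field_simp
  nlinarith [heqr', sq_nonneg (Real.cos (φ r)), hrp, mul_pos hπ hrp]
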